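/- Let ξ^μ(θ) be defined implicitly by ξ_μ · tan(√(v ξ²))/√(v ξ²) = ∂_μθ with v > 0, where ξ² := ξ_μξ^μ. Then the induced metric G_{μν} := g_{αβ} e^α_μ e^β_ν built from the vielbein e^α_μ = δ^α_μ + (ξ^αξ_μ/ξ²)(1/cos√(vξ²) − 1) equals g_{μν} + v ∂_μθ ∂_νθ. -/

import Mathlib

/-- The Minkowski metric of signature (+,−,−,−). -/
def mink (μ ν : Fin 4) : ℝ := if μ = ν then (if μ = 0 then 1 else -1) else 0

/-- The Minkowski square `ξ² = g_{μν} ξ^μ ξ^ν`. -/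
def msq (ξ : Fin 4 → ℝ) : ℝ := ∑ μ, ∑ ν, mink μ ν * ξ μ * ξ ν

/-- The lowered-index vector `ξ_μ = g_{μν} ξ^ν`. -/
def lowerIdx (ξ : Fin 4 → ℝ) (μ : Fin 4) : ℝ := ∑ ν, mink μ ν * ξ ν

/-- The vielbein `e^α_μ = δ^α_μ + (ξ^α ξ_μ / ξ²)(1/cos√(vξ²) − 1)`. -/
noncomputable def viel (v : ℝ) (ξ : Fin 4 → ℝ) (α μ : Fin 4) : ℝ :=
  (if α = μ then 1 else 0)
    + ξ α * lowerIdx ξ μ / msq ξ * (1 / Real.cos (Real.sqrt (v * msq ξ)) - 1)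

/-- The Minkowski metric is symmetric. -/
lemma mink_symm (α β : Fin 4) : mink α β = mink β α := by
  unfold mink
  by_cases h : α = β
  · subst h; rfl
  · simp [h, Ne.symm h]

/-- Contracting `ξ` with its lowered version gives `ξ²`. -/
lemma sum_mul_lowerIdx (ξ : Fin 4 → ℝ) : (∑ α, ξ α * lowerIdx ξ α) = msq ξ := by
  simp only [msq, lowerIdx, Finset.mul_sum]
  refine Finset.sum_congr rfl fun α _ => Finset.sum_congr rfl fun β _ => by ring

/-- Contracting on the first index of `mink` also lowers. -/
lemma sum_mink_mul (ξ : Fin 4 → ℝ) (ν : Fin 4) :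
    (∑ α, mink α ν * ξ α) = lowerIdx ξ ν := by
  unfold lowerIdx
  refine Finset.sum_congr rfl fun α _ => by rw [mink_symm]

/-- The abstract vielbein contraction identity. -/
lemma key_sum (ξ : Fin 4 → ℝ) (p q : ℝ) (μ ν : Fin 4) :
    (∑ α, ∑ β, mink α β * ((if α = μ then (1:ℝ) else 0) + ξ α * p)
        * ((if β = ν then (1:ℝ) else 0) + ξ β * q))
      = mink μ ν + p * lowerIdx ξ ν + lowerIdx ξ μ * q + msq ξ * (p * q) := by
  have h1 : ∀ α : Fin 4,
      (∑ β, mink α β * ((if α = μ then (1:ℝ) else 0) + ξ α * p)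
        * ((if β = ν then (1:ℝ) else 0) + ξ β * q))
      = ((if α = μ then (1:ℝ) else 0) + ξ α * p) * (mink α ν + lowerIdx ξ α * q) := by
    intro α
    have : ∀ β : Fin 4, mink α β * ((if α = μ then (1:ℝ) else 0) + ξ α * p)
        * ((if β = ν then (1:ℝ) else 0) + ξ β * q)
        = ((if α = μ then (1:ℝ) else 0) + ξ α * p)
            * ((if β = ν then mink α β else 0) + mink α β * ξ β * q) := by
      intro β
      by_cases h : β = ν <;> simp [h] <;> ring
    rw [Finset.sum_congr rfl fun β _ => this β, ← Finset.mul_sum]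
    congr 1
    rw [Finset.sum_add_distrib, Finset.sum_ite_eq' Finset.univ ν (fun β => mink α β)]
    simp [lowerIdx, Finset.sum_mul]
  rw [Finset.sum_congr rfl fun α _ => h1 α]
  have h2 : ∀ α : Fin 4,
      ((if α = μ then (1:ℝ) else 0) + ξ α * p) * (mink α ν + lowerIdx ξ α * q)
      = (if α = μ then mink α ν + lowerIdx ξ α * q else 0)
          + (mink α ν * ξ α) * p + (ξ α * lowerIdx ξ α) * (p * q) := by
    intro α
    by_cases h : α = μ <;> simp [h] <;> ring
  rw [Finset.sum_congr rfl fun α _ => h2 α]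
  rw [Finset.sum_add_distrib, Finset.sum_add_distrib,
    Finset.sum_ite_eq' Finset.univ μ (fun α => mink α ν + lowerIdx ξ α * q),
    ← Finset.sum_mul, ← Finset.sum_mul, sum_mink_mul, sum_mul_lowerIdx]
  simp [mink_symm μ ν]
  ring

/-- With `ξ_μ tan√(vξ²)/√(vξ²) = ∂_μθ`, the induced metric
`G_{μν} = g_{αβ} e^α_μ e^β_ν` equals `g_{μν} + v ∂_μθ ∂_νθ`. -/
theorem stmt19 (v : ℝ) (hv : 0 < v) (ξ dθ : Fin 4 → ℝ)
    (hpos : 0 < v * msq ξ)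
    (hcos : Real.cos (Real.sqrt (v * msq ξ)) ≠ 0)
    (hθ : ∀ μ, dθ μ = lowerIdx ξ μ *
      (Real.tan (Real.sqrt (v * msq ξ)) / Real.sqrt (v * msq ξ))) :
    ∀ μ ν, (∑ α, ∑ β, mink α β * viel v ξ α μ * viel v ξ β ν)
      = mink μ ν + v * dθ μ * dθ ν := by
  have hsq : 0 < msq ξ := by nlinarith
  have hs : msq ξ ≠ 0 := ne_of_gt hsq
  set r := Real.sqrt (v * msq ξ) with hrdef
  have hr2 : r ^ 2 = v * msq ξ := Real.sq_sqrt hpos.le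
  have hr0 : r ≠ 0 := (Real.sqrt_pos.mpr hpos).ne'
  have hsin2 : Real.sin r ^ 2 = 1 - Real.cos r ^ 2 := by
    nlinarith [Real.sin_sq_add_cos_sq r]
  set a := 1 / Real.cos r - 1 with hadef
  intro μ ν
  have hviel : ∀ (α μ' : Fin 4), viel v ξ α μ'
      = (if α = μ' then (1:ℝ) else 0) + ξ α * (lowerIdx ξ μ' / msq ξ * a) := by
    intro α μ'
    simp only [viel, ← hrdef, ← hadef]
    ring
  have lhs_eq : (∑ α, ∑ β, mink α β * viel v ξ α μ * viel v ξ β ν)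
      = mink μ ν + lowerIdx ξ μ * lowerIdx ξ ν / msq ξ * (a ^ 2 + 2 * a) := by
    have := key_sum ξ (lowerIdx ξ μ / msq ξ * a) (lowerIdx ξ ν / msq ξ * a) μ ν
    simp only [← hviel] at this
    rw [this]
    field_simp
    ring
  rw [lhs_eq, hθ, hθ]
  have hA : v * (lowerIdx ξ μ * (Real.tan r / r)) * (lowerIdx ξ ν * (Real.tan r / r))
      = lowerIdx ξ μ * lowerIdx ξ ν / msq ξ * (a ^ 2 + 2 * a) := by
    rw [Real.tan_eq_sin_div_cos, hadef]
    have hc2 : Real.cos r ^ 2 ≠ 0 := pow_ne_zero 2 hcos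
    field_simp
    linear_combination (v * lowerIdx ξ μ * lowerIdx ξ ν * msq ξ) * hsin2
      + (lowerIdx ξ μ * lowerIdx ξ ν * (Real.cos r ^ 2 - 1)) * hr2
  rw [hA]
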